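/- Let (M, ρ, μ) be a doubling metric measure space with dimension d, and let 0 < θ ≤ 1 and γ > 2d/θ. Suppose F : M → [0,∞) is measurable and let M_θ F(x) := sup_{B ∋ x} ( |B|^{-1} ∫_B F(y)^θ dμ(y) )^{1/θ} be the θ-maximal function. Then there is a constant c > 0 such that for all x ∈ M and j ∈ ℤ, ∫_M F(z)^θ / ( μ(B(x, 2^{-j})) (1 + 2^j ρ(x,z))^{γθ - d} ) dμ(z) ≤ c (M_θ F(x))^θ. -/

import Mathlib

open MeasureTheory Metric Set

theorem weighted_integral_le_maximal {M : Type*} [MetricSpace M] [MeasurableSpace M]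
    (μ : Measure M) (c₀ : ℝ) (hc₀ : 1 < c₀)
    (hpos : ∀ (x : M) (r : ℝ), 0 < r → 0 < μ (ball x r))
    (hfin : ∀ (x : M) (r : ℝ), 0 < r → μ (ball x r) < ⊤)
    (hdbl : ∀ (x : M) (r : ℝ), 0 < r →
      (μ (ball x (2 * r))).toReal ≤ c₀ * (μ (ball x r)).toReal)
    (θ γ : ℝ) (hθ0 : 0 < θ) (hθ1 : θ ≤ 1)
    (hγ : 2 * Real.logb 2 c₀ / θ < γ) :
    ∃ c > 0, ∀ (F MF : M → ℝ), Measurable F → (∀ y, 0 ≤ F y) →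
      ∀ (x : M) (j : ℤ),
      (∀ (z : M) (r : ℝ), 0 < r → x ∈ ball z r →
        (∫ y in ball z r, F y ^ θ ∂μ) ≤ (μ (ball z r)).toReal * MF x ^ θ) →
      (∫ z, F z ^ θ /
          ((μ (ball x ((2 : ℝ) ^ (-j)))).toReal *
            (1 + (2 : ℝ) ^ j * dist x z) ^ (γ * θ - Real.logb 2 c₀)) ∂μ) ≤
        c * MF x ^ θ := by
  have h2 : (1:ℝ) < 2 := one_lt_two
  set d := Real.logb 2 c₀ with hd_def
  have hc₀0 : (0:ℝ) < c₀ := lt_trans one_pos hc₀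
  have hd : 0 < d := Real.logb_pos h2 hc₀
  set E := γ * θ - d with hE_def
  have hγθ : 2 * d < γ * θ := by
    have := (div_lt_iff₀ hθ0).mp hγ
    linarith
  have hdE : d < E := by rw [hE_def]; linarith
  have hE0 : 0 < E := hd.trans hdE
  have hc₀eq : c₀ = (2:ℝ) ^ d := (Real.rpow_logb two_pos (by norm_num) hc₀0).symm
  set r := (2:ℝ) ^ (d - E) with hr_def
  have hr0 : 0 < r := Real.rpow_pos_of_pos two_pos _
  have hr1 : r < 1 := Real.rpow_lt_one_of_one_lt_of_neg h2 (by linarith)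
  have h1r : 0 < 1 - r := by linarith
  refine ⟨1 + c₀ * (1 - r)⁻¹, by positivity, ?_⟩
  intro F MF hF hF0 x j hMF
  set t := (2:ℝ) ^ (-j) with ht_def
  have ht : (0:ℝ) < t := zpow_pos two_pos _
  set D := (μ (ball x t)).toReal with hD_def
  have hD0 : 0 < D :=
    ENNReal.toReal_pos (hpos x t ht).ne' (hfin x t ht).ne
  have hMF0 : 0 ≤ MF x ^ θ := by
    have h1 := hMF x 1 one_pos (mem_ball_self one_pos)
    have h2' : 0 ≤ ∫ y in ball x 1, F y ^ θ ∂μ :=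
      integral_nonneg fun y => Real.rpow_nonneg (hF0 y) θ
    have h3 : 0 < (μ (ball x 1)).toReal :=
      ENNReal.toReal_pos (hpos x 1 one_pos).ne' (hfin x 1 one_pos).ne
    nlinarith
  have hc_nonneg : 0 ≤ (1 + c₀ * (1 - r)⁻¹) * MF x ^ θ := by positivity
  -- the weight
  have hw1 : ∀ z : M, (1:ℝ) ≤ 1 + (2:ℝ) ^ j * dist x z := fun z => by
    have : (0:ℝ) ≤ (2:ℝ) ^ j * dist x z :=
      mul_nonneg (zpow_pos two_pos j).le dist_nonneg
    linarith
  have hwE_pos : ∀ z : M, (0:ℝ) < (1 + (2:ℝ) ^ j * dist x z) ^ E := fun z =>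
    Real.rpow_pos_of_pos (lt_of_lt_of_le one_pos (hw1 z)) _
  set g : M → ℝ := fun z => F z ^ θ / (D * (1 + (2:ℝ) ^ j * dist x z) ^ E) with hg_def
  have hg_nonneg : ∀ z, 0 ≤ g z := fun z =>
    div_nonneg (Real.rpow_nonneg (hF0 z) θ) (mul_nonneg hD0.le (hwE_pos z).le)
  by_cases hInt : Integrable g μ
  swap
  · rw [integral_undef hInt]; exact hc_nonneg
  have hdivle : ∀ (a b c : ℝ), 0 ≤ a → 0 < b → b ≤ c → a / c ≤ a / b := by
    intro a b c ha hb hbc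
    gcongr
  -- measurability of F ^ θ
  have hFθmeas : Measurable fun z => F z ^ θ := hF.pow measurable_const
  have hFθnn : ∀ z : M, 0 ≤ F z ^ θ := fun z => Real.rpow_nonneg (hF0 z) θ
  -- pulling out constants in lintegrals
  have hconst : ∀ (q : ℝ), 0 ≤ q → ∀ s : Set M,
      (∫⁻ z in s, ENNReal.ofReal (q * F z ^ θ) ∂μ) =
        ENNReal.ofReal q * ∫⁻ z in s, ENNReal.ofReal (F z ^ θ) ∂μ := by
    intro q hq s
    rw [← lintegral_const_mul' _ _ ENNReal.ofReal_ne_top]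
    congr 1; funext z; rw [ENNReal.ofReal_mul hq]
  -- the key set-lintegral bound over balls
  have hball : ∀ R : ℝ, 0 < R →
      (∫⁻ z in ball x R, ENNReal.ofReal (F z ^ θ) ∂μ) ≤
        ENNReal.ofReal ((μ (ball x R)).toReal * MF x ^ θ) := by
    intro R hR
    have hgae : AEMeasurable (fun z => ENNReal.ofReal (g z)) (μ.restrict (ball x R)) :=
      ENNReal.measurable_ofReal.comp_aemeasurable
        ((hInt.1.aemeasurable).mono_measure Measure.restrict_le_self)
    set C : ℝ := D * (1 + (2:ℝ) ^ j * R) ^ E with hC_def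
    have hC0 : 0 < C := by
      have : (0:ℝ) < (1 + (2:ℝ) ^ j * R) ^ E :=
        Real.rpow_pos_of_pos (by positivity) _
      positivity
    have hbound : ∀ z ∈ ball x R, ENNReal.ofReal (F z ^ θ) ≤
        ENNReal.ofReal (C * g z) := by
      intro z hz
      apply ENNReal.ofReal_le_ofReal
      have hdz : dist x z < R := by rwa [mem_ball, dist_comm] at hz
      have hle : (1 + (2:ℝ) ^ j * dist x z) ^ E ≤ (1 + (2:ℝ) ^ j * R) ^ E := by
        apply Real.rpow_le_rpow (lt_of_lt_of_le one_pos (hw1 z)).le _ hE0.le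
        have : (2:ℝ) ^ j * dist x z ≤ (2:ℝ) ^ j * R :=
          mul_le_mul_of_nonneg_left hdz.le (zpow_pos two_pos j).le
        linarith
      have heq : F z ^ θ = (D * (1 + (2:ℝ) ^ j * dist x z) ^ E) * g z := by
        rw [hg_def]
        field_simp
      rw [heq, hC_def]
      apply mul_le_mul_of_nonneg_right _ (hg_nonneg z)
      exact mul_le_mul_of_nonneg_left hle hD0.le
    have hIntF : Integrable (fun z => F z ^ θ) (μ.restrict (ball x R)) := by
      refine ⟨hFθmeas.aestronglyMeasurable, ?_⟩
      rw [hasFiniteIntegral_iff_norm]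
      calc (∫⁻ z in ball x R, ENNReal.ofReal ‖F z ^ θ‖ ∂μ)
          = ∫⁻ z in ball x R, ENNReal.ofReal (F z ^ θ) ∂μ := by
            congr 1; funext z; rw [Real.norm_of_nonneg (hFθnn z)]
        _ ≤ ∫⁻ z in ball x R, ENNReal.ofReal (C * g z) ∂μ :=
            setLIntegral_mono_ae (by
              have : (fun z => ENNReal.ofReal (C * g z)) =
                  fun z => ENNReal.ofReal C * ENNReal.ofReal (g z) := by
                funext z; rw [ENNReal.ofReal_mul hC0.le]
              rw [this]
              exact hgae.const_mul _) (ae_of_all _ hbound)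
        _ = ENNReal.ofReal C * ∫⁻ z in ball x R, ENNReal.ofReal (g z) ∂μ := by
            rw [← lintegral_const_mul' _ _ ENNReal.ofReal_ne_top]
            congr 1; funext z; rw [ENNReal.ofReal_mul hC0.le]
        _ ≤ ENNReal.ofReal C * ∫⁻ z, ENNReal.ofReal (g z) ∂μ := by
            gcongr
            exact Measure.restrict_le_self
        _ ≤ ENNReal.ofReal C * ∫⁻ z, ‖g z‖₊ ∂μ := by
            gcongr with z
            exact Real.ofReal_le_enorm (g z)
        _ < ⊤ := ENNReal.mul_lt_top ENNReal.ofReal_lt_top hInt.2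
    rw [← ofReal_integral_eq_lintegral_ofReal hIntF (ae_of_all _ hFθnn)]
    exact ENNReal.ofReal_le_ofReal (hMF x R hR (mem_ball_self hR))
  -- doubling iterated
  have hdouble : ∀ (m : ℕ) (ρ : ℝ), 0 < ρ →
      (μ (ball x ((2:ℝ) ^ m * ρ))).toReal ≤ c₀ ^ m * (μ (ball x ρ)).toReal := by
    intro m
    induction m with
    | zero => intro ρ hρ; simp
    | succ n ih =>
      intro ρ hρ
      have h1 : ((2:ℝ) ^ (n+1) * ρ) = 2 * ((2:ℝ) ^ n * ρ) := by ring
      calc (μ (ball x ((2:ℝ) ^ (n+1) * ρ))).toReal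
          = (μ (ball x (2 * ((2:ℝ) ^ n * ρ)))).toReal := by rw [h1]
        _ ≤ c₀ * (μ (ball x ((2:ℝ) ^ n * ρ))).toReal := hdbl x _ (by positivity)
        _ ≤ c₀ * (c₀ ^ n * (μ (ball x ρ)).toReal) :=
            mul_le_mul_of_nonneg_left (ih ρ hρ) hc₀0.le
        _ = c₀ ^ (n+1) * (μ (ball x ρ)).toReal := by ring
  -- balls covering the space
  set B : ℕ → Set M := fun m => ball x ((2:ℝ) ^ m * t) with hB_def
  have hcover : (univ : Set M) ⊆ B 0 ∪ ⋃ m : ℕ, (B (m+1) \ B m) := by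
    intro z _
    classical
    have hex : ∃ n : ℕ, dist x z < (2:ℝ) ^ n * t := by
      obtain ⟨n, hn⟩ := pow_unbounded_of_one_lt (dist x z / t) h2
      exact ⟨n, by rwa [div_lt_iff₀ ht] at hn⟩
    by_cases h0 : dist x z < (2:ℝ) ^ (0:ℕ) * t
    · left
      simp only [hB_def, mem_ball, dist_comm z x]
      exact h0
    · right
      have hm := Nat.find_spec hex
      have hm0 : Nat.find hex ≠ 0 := by
        intro h
        rw [h] at hm
        exact h0 hm
      obtain ⟨k, hk⟩ : ∃ k, Nat.find hex = k + 1 :=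
        ⟨Nat.find hex - 1, (Nat.succ_pred_eq_of_pos (Nat.pos_of_ne_zero hm0)).symm⟩
      refine mem_iUnion.mpr ⟨k, ?_, ?_⟩
      · simp only [hB_def, mem_ball, dist_comm z x]
        rw [← hk]
        exact hm
      · intro hzk
        have hPk : dist x z < (2:ℝ) ^ k * t := by
          simpa only [hB_def, mem_ball, dist_comm z x] using hzk
        exact Nat.find_min hex (by omega) hPk
  -- piece 0
  have hpiece0 : (∫⁻ z in B 0, ENNReal.ofReal (g z) ∂μ) ≤ ENNReal.ofReal (MF x ^ θ) := by
    have hb : ∀ z ∈ B 0, ENNReal.ofReal (g z) ≤ ENNReal.ofReal (D⁻¹ * F z ^ θ) := by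
      intro z _
      apply ENNReal.ofReal_le_ofReal
      rw [hg_def]
      have h1 : (1:ℝ) ≤ (1 + (2:ℝ) ^ j * dist x z) ^ E := by
        calc (1:ℝ) = 1 ^ E := (Real.one_rpow E).symm
          _ ≤ _ := Real.rpow_le_rpow zero_le_one (hw1 z) hE0.le
      calc F z ^ θ / (D * (1 + (2:ℝ) ^ j * dist x z) ^ E)
          ≤ F z ^ θ / (D * 1) :=
            hdivle _ _ _ (hFθnn z) (by positivity)
              (mul_le_mul_of_nonneg_left h1 hD0.le)
        _ = D⁻¹ * F z ^ θ := by rw [mul_one, div_eq_inv_mul]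
    calc (∫⁻ z in B 0, ENNReal.ofReal (g z) ∂μ)
        ≤ ∫⁻ z in B 0, ENNReal.ofReal (D⁻¹ * F z ^ θ) ∂μ :=
          setLIntegral_mono ((hFθmeas.const_mul _).ennreal_ofReal) hb
      _ = ENNReal.ofReal D⁻¹ * ∫⁻ z in B 0, ENNReal.ofReal (F z ^ θ) ∂μ :=
          hconst _ (by positivity) _
      _ ≤ ENNReal.ofReal D⁻¹ * ENNReal.ofReal ((μ (B 0)).toReal * MF x ^ θ) := by
          gcongr
          exact hball _ (by positivity)
      _ ≤ ENNReal.ofReal (MF x ^ θ) := by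
          rw [← ENNReal.ofReal_mul (by positivity)]
          apply ENNReal.ofReal_le_ofReal
          have hB0 : B 0 = ball x t := by
            rw [hB_def]; norm_num
          rw [hB0, ← hD_def, ← mul_assoc, inv_mul_cancel₀ hD0.ne', one_mul]
  -- pieces m ≥ 1
  have hpiece : ∀ m : ℕ, (∫⁻ z in B (m+1) \ B m, ENNReal.ofReal (g z) ∂μ) ≤
      ENNReal.ofReal (c₀ * r ^ m * MF x ^ θ) := by
    intro m
    set K : ℝ := D⁻¹ * (((2:ℝ) ^ m) ^ E)⁻¹ with hK_def
    have h2mE : (0:ℝ) < ((2:ℝ) ^ m) ^ E := Real.rpow_pos_of_pos (by positivity) _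
    have hK0 : 0 < K := by positivity
    have hb : ∀ z ∈ B (m+1) \ B m, ENNReal.ofReal (g z) ≤
        ENNReal.ofReal (K * F z ^ θ) := by
      rintro z ⟨_, hz2⟩
      apply ENNReal.ofReal_le_ofReal
      rw [hg_def]
      have hdz : (2:ℝ) ^ m * t ≤ dist x z := by
        by_contra hcon
        exact hz2 (by simp only [hB_def, mem_ball, dist_comm z x]; linarith)
      have hjt : (2:ℝ) ^ j * t = 1 := by
        rw [ht_def, ← zpow_add₀ (two_ne_zero : (2:ℝ) ≠ 0)]
        simp
      have hwge : ((2:ℝ) ^ m : ℝ) ≤ 1 + (2:ℝ) ^ j * dist x z := by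
        have h1 : (2:ℝ) ^ j * ((2:ℝ) ^ m * t) ≤ (2:ℝ) ^ j * dist x z :=
          mul_le_mul_of_nonneg_left hdz (zpow_pos two_pos j).le
        have h2'' : (2:ℝ) ^ j * ((2:ℝ) ^ m * t) = (2:ℝ) ^ m := by
          rw [show (2:ℝ) ^ j * ((2:ℝ) ^ m * t) = ((2:ℝ) ^ j * t) * (2:ℝ) ^ m by ring,
            hjt, one_mul]
        linarith
      have hle : ((2:ℝ) ^ m) ^ E ≤ (1 + (2:ℝ) ^ j * dist x z) ^ E :=
        Real.rpow_le_rpow (by positivity) hwge hE0.le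
      calc F z ^ θ / (D * (1 + (2:ℝ) ^ j * dist x z) ^ E)
          ≤ F z ^ θ / (D * ((2:ℝ) ^ m) ^ E) :=
            hdivle _ _ _ (hFθnn z) (by positivity)
              (mul_le_mul_of_nonneg_left hle hD0.le)
        _ = K * F z ^ θ := by
            rw [hK_def, div_eq_mul_inv, mul_inv]
            ring
    have hgeo : c₀ ^ m * (((2:ℝ) ^ m) ^ E)⁻¹ = r ^ m := by
      rw [hc₀eq, hr_def,
        ← Real.rpow_natCast ((2:ℝ) ^ d) m, ← Real.rpow_natCast ((2:ℝ) ^ (d - E)) m,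
        ← Real.rpow_natCast (2:ℝ) m,
        ← Real.rpow_mul two_pos.le, ← Real.rpow_mul two_pos.le,
        ← Real.rpow_mul two_pos.le,
        ← Real.rpow_neg two_pos.le, ← Real.rpow_add two_pos]
      congr 1
      ring
    calc (∫⁻ z in B (m+1) \ B m, ENNReal.ofReal (g z) ∂μ)
        ≤ ∫⁻ z in B (m+1) \ B m, ENNReal.ofReal (K * F z ^ θ) ∂μ :=
          setLIntegral_mono ((hFθmeas.const_mul _).ennreal_ofReal) hb
      _ ≤ ∫⁻ z in B (m+1), ENNReal.ofReal (K * F z ^ θ) ∂μ :=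
          lintegral_mono_set diff_subset
      _ = ENNReal.ofReal K * ∫⁻ z in B (m+1), ENNReal.ofReal (F z ^ θ) ∂μ :=
          hconst _ hK0.le _
      _ ≤ ENNReal.ofReal K * ENNReal.ofReal ((μ (B (m+1))).toReal * MF x ^ θ) := by
          gcongr
          exact hball _ (by positivity)
      _ ≤ ENNReal.ofReal (c₀ * r ^ m * MF x ^ θ) := by
          rw [← ENNReal.ofReal_mul hK0.le]
          apply ENNReal.ofReal_le_ofReal
          have hμB : (μ (B (m+1))).toReal ≤ c₀ ^ (m+1) * D := by
            rw [hB_def, hD_def]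
            exact hdouble (m+1) t ht
          calc K * ((μ (B (m+1))).toReal * MF x ^ θ)
              ≤ K * ((c₀ ^ (m+1) * D) * MF x ^ θ) := by
                apply mul_le_mul_of_nonneg_left _ hK0.le
                exact mul_le_mul_of_nonneg_right hμB hMF0
            _ = c₀ * (c₀ ^ m * (((2:ℝ) ^ m) ^ E)⁻¹) * MF x ^ θ := by
                rw [hK_def]
                field_simp
                ring
            _ = c₀ * r ^ m * MF x ^ θ := by rw [hgeo]
  -- conclusion
  have hg_eq : ∫ z, g z ∂μ = (∫⁻ z, ENNReal.ofReal (g z) ∂μ).toReal :=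
    integral_eq_lintegral_of_nonneg_ae (ae_of_all _ hg_nonneg) hInt.1
  show ∫ z, g z ∂μ ≤ (1 + c₀ * (1 - r)⁻¹) * MF x ^ θ
  rw [hg_eq]
  apply ENNReal.toReal_le_of_le_ofReal hc_nonneg
  have hsummable : Summable (fun m : ℕ => c₀ * r ^ m * MF x ^ θ) :=
    (((summable_geometric_of_lt_one hr0.le hr1).mul_left c₀).mul_right _)
  calc (∫⁻ z, ENNReal.ofReal (g z) ∂μ)
      = ∫⁻ z in (univ : Set M), ENNReal.ofReal (g z) ∂μ := by rw [Measure.restrict_univ]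
    _ ≤ ∫⁻ z in B 0 ∪ ⋃ m : ℕ, (B (m+1) \ B m), ENNReal.ofReal (g z) ∂μ :=
        lintegral_mono_set hcover
    _ ≤ (∫⁻ z in B 0, ENNReal.ofReal (g z) ∂μ) +
        ∫⁻ z in ⋃ m : ℕ, (B (m+1) \ B m), ENNReal.ofReal (g z) ∂μ :=
        lintegral_union_le _ _ _
    _ ≤ ENNReal.ofReal (MF x ^ θ) +
        ∑' m : ℕ, ∫⁻ z in B (m+1) \ B m, ENNReal.ofReal (g z) ∂μ := by
        gcongr
        exact lintegral_iUnion_le _ _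
    _ ≤ ENNReal.ofReal (MF x ^ θ) +
        ∑' m : ℕ, ENNReal.ofReal (c₀ * r ^ m * MF x ^ θ) := by
        gcongr with m
        exact hpiece m
    _ = ENNReal.ofReal ((1 + c₀ * (1 - r)⁻¹) * MF x ^ θ) := by
        rw [← ENNReal.ofReal_tsum_of_nonneg (fun m => by positivity) hsummable]
        rw [← ENNReal.ofReal_add hMF0 (tsum_nonneg fun m => by positivity)]
        congr 1
        have htsum : ∑' m : ℕ, c₀ * r ^ m * MF x ^ θ = c₀ * (1 - r)⁻¹ * MF x ^ θ := by
          have hfun : (fun m : ℕ => c₀ * r ^ m * MF x ^ θ) =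
              fun m : ℕ => (c₀ * MF x ^ θ) * r ^ m := by funext m; ring
          rw [hfun, tsum_mul_left, tsum_geometric_of_lt_one hr0.le hr1]
          ring
        rw [htsum]
        ring
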